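/- Let ℓ ∈ ℕ, let D ⊆ ℕ have positive upper Banach density d*(D) = δ > 0, let M ≥ 2^ℓ, let n₁,...,n_M ∈ ℕ, and let E ⊆ ℕ satisfy d*(E) = 0. Then there exists n ∈ D such that for all 1 ≤ j₁ < ... < j_{2^ℓ−1} ≤ M, ∂(n_{j₁},...,n_{j_{2^ℓ−1}}, n) ∉ E. -/

import Mathlib

/-- The iterated difference map: `del ℓ f` is `∂(f 0, ..., f (2^ℓ - 1))`. -/
def del : ℕ → (ℕ → ℤ) → ℤ
  | 0, f => f 0
  | (ℓ + 1), f => del ℓ (fun i => f (2 ^ ℓ + i)) - del ℓ f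

/-- The upper Banach density `d*(A) = inf_N sup_M |A ∩ (M, M+N]| / N`. -/
noncomputable def upperBanachDensity (A : Set ℕ) : ℝ :=
  ⨅ N : {N : ℕ // 0 < N}, ⨆ M : ℕ, ((A ∩ Set.Ioc M (M + (N : ℕ))).ncard : ℝ) / (N : ℕ)

lemma del_congr : ∀ (ℓ : ℕ) (f g : ℕ → ℤ), (∀ i, i < 2 ^ ℓ → f i = g i) →
    del ℓ f = del ℓ g := by
  intro ℓ
  induction ℓ with
  | zero => intro f g h; exact h 0 (by norm_num)
  | succ ℓ ih =>
    intro f g h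
    simp only [del]
    rw [ih f g (fun i hi => h i (by have := Nat.one_le_two_pow (n := ℓ); rw [pow_succ]; omega)),
      ih (fun i => f (2 ^ ℓ + i)) (fun i => g (2 ^ ℓ + i))
        (fun i hi => h _ (by rw [pow_succ]; omega))]

lemma del_last : ∀ (ℓ : ℕ) (f g : ℕ → ℤ), (∀ i, i < 2 ^ ℓ - 1 → f i = g i) →
    del ℓ f - f (2 ^ ℓ - 1) = del ℓ g - g (2 ^ ℓ - 1) := by
  intro ℓ
  induction ℓ with
  | zero => intro f g h; simp [del]
  | succ ℓ ih =>
    intro f g h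
    have h1 : (1:ℕ) ≤ 2 ^ ℓ := Nat.one_le_two_pow
    have key : 2 ^ ℓ + (2 ^ ℓ - 1) = 2 ^ (ℓ+1) - 1 := by
      rw [pow_succ]; omega
    have hlow : del ℓ f = del ℓ g := by
      apply del_congr
      intro i hi
      exact h i (by rw [pow_succ]; omega)
    have hhigh := ih (fun i => f (2 ^ ℓ + i)) (fun i => g (2 ^ ℓ + i))
      (fun i hi => h _ (by rw [pow_succ]; omega))
    simp only [del, key] at hhigh ⊢
    omega

lemma cnt_finite (A : Set ℕ) (M N : ℕ) : (A ∩ Set.Ioc M (M + N)).Finite :=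
  (Set.finite_Ioc M (M + N)).subset Set.inter_subset_right

lemma cnt_le (A : Set ℕ) (M N : ℕ) : (A ∩ Set.Ioc M (M + N)).ncard ≤ N := by
  have := Set.ncard_le_ncard (Set.inter_subset_right (s := A) (t := Set.Ioc M (M+N)))
    (Set.finite_Ioc M (M + N))
  have h2 : (Set.Ioc M (M + N)).ncard = N := by
    simp [Set.ncard_eq_toFinset_card', Set.toFinset_Ioc]
  omega

lemma ubd_le (A : Set ℕ) (N : ℕ) (hN : 0 < N) :
    upperBanachDensity A ≤ ⨆ M : ℕ, ((A ∩ Set.Ioc M (M + N)).ncard : ℝ) / N := by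
  apply ciInf_le (c := (⟨N, hN⟩ : {N : ℕ // 0 < N}))
  refine ⟨0, ?_⟩
  rintro x ⟨⟨N', hN'⟩, rfl⟩
  exact Real.iSup_nonneg fun M => by positivity

lemma bddAbove_cnt (A : Set ℕ) (N : ℕ) :
    BddAbove (Set.range fun M : ℕ => ((A ∩ Set.Ioc M (M + N)).ncard : ℝ) / N) := by
  refine ⟨1, ?_⟩
  rintro x ⟨M, rfl⟩
  rcases Nat.eq_zero_or_pos N with h | h
  · simp [h]
  · rw [div_le_one (by positivity)]
    exact_mod_cast cnt_le A M N

lemma exists_good_N (E : Set ℕ) (hE : upperBanachDensity E = 0) (ε : ℝ) (hε : 0 < ε) :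
    ∃ N : ℕ, 0 < N ∧ ∀ M : ℕ, ((E ∩ Set.Ioc M (M + N)).ncard : ℝ) ≤ ε * N := by
  have h : upperBanachDensity E < ε := by rw [hE]; exact hε
  obtain ⟨⟨N, hN⟩, hlt⟩ := exists_lt_of_ciInf_lt h
  refine ⟨N, hN, fun M => ?_⟩
  have h2 : ((E ∩ Set.Ioc M (M + N)).ncard : ℝ) / N ≤ _ := le_ciSup (bddAbove_cnt E N) M
  have h3 := h2.trans_lt hlt
  rw [div_lt_iff₀ (by positivity)] at h3
  linarith [h3]

lemma cnt_mul (E : Set ℕ) (N : ℕ) (ε : ℝ)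
    (hb : ∀ M : ℕ, ((E ∩ Set.Ioc M (M + N)).ncard : ℝ) ≤ ε * N) :
    ∀ (t M : ℕ), ((E ∩ Set.Ioc M (M + t * N)).ncard : ℝ) ≤ ε * (t * N) := by
  intro t
  induction t with
  | zero => intro M; simp
  | succ t ih =>
    intro M
    have hsplit : Set.Ioc M (M + (t+1) * N) =
        Set.Ioc M (M + t * N) ∪ Set.Ioc (M + t * N) (M + t * N + N) := by
      rw [Set.Ioc_union_Ioc_eq_Ioc (by omega) (by omega)]
      congr 1; ring
    rw [hsplit, Set.inter_union_distrib_left]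
    have := Set.ncard_union_le (E ∩ Set.Ioc M (M + t*N)) (E ∩ Set.Ioc (M + t*N) (M + t*N + N))
    have h1 := ih M
    have h2 := hb (M + t * N)
    have hc : (((E ∩ Set.Ioc M (M + t*N)) ∪ (E ∩ Set.Ioc (M + t*N) (M + t*N + N))).ncard : ℝ)
        ≤ ε * (t * N) + ε * N := by
      calc (((E ∩ Set.Ioc M (M + t*N)) ∪ (E ∩ Set.Ioc (M + t*N) (M + t*N + N))).ncard : ℝ)
          ≤ ((E ∩ Set.Ioc M (M + t*N)).ncard : ℝ) + ((E ∩ Set.Ioc (M + t*N) (M + t*N + N)).ncard : ℝ) := by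
            exact_mod_cast this
        _ ≤ ε * (t * N) + ε * N := add_le_add h1 h2
    push_cast at hc ⊢
    nlinarith [hc]

lemma bad_cnt (E : Set ℕ) (c : ℤ) (M₀ N : ℕ) :
    ({m : ℕ | ∃ e ∈ E, (m:ℤ) = (e:ℤ) - c} ∩ Set.Ioc M₀ (M₀+N)).ncard ≤
      (E ∩ Set.Ioc (M₀+c).toNat ((M₀+c).toNat + N)).ncard + 1 := by
  set a : ℕ := (M₀+c).toNat with ha
  set F : Set ℕ := E ∩ ({0} ∪ Set.Ioc a (a+N)) with hF
  have hFfin : F.Finite := by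
    apply Set.Finite.subset (Set.Finite.union (Set.finite_singleton 0) (Set.finite_Ioc a (a+N)))
    exact Set.inter_subset_right
  have hsub : {m : ℕ | ∃ e ∈ E, (m:ℤ) = (e:ℤ) - c} ∩ Set.Ioc M₀ (M₀+N) ⊆
      (fun e : ℕ => ((e:ℤ) - c).toNat) '' F := by
    rintro m ⟨⟨e, heE, hme⟩, hm1, hm2⟩
    refine ⟨e, ⟨heE, ?_⟩, ?_⟩
    · rcases Nat.eq_zero_or_pos e with he0 | hepos
      · exact Or.inl he0
      · refine Or.inr ⟨?_, ?_⟩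
        · have h1 : (M₀:ℤ) + c < (e:ℤ) := by
            have : (M₀:ℤ) < (m:ℤ) := by exact_mod_cast hm1
            omega
          omega
        · have h1 : (e:ℤ) ≤ (M₀:ℤ) + N + c := by
            have : (m:ℤ) ≤ (M₀:ℤ) + N := by exact_mod_cast hm2
            omega
          omega
    · show ((e:ℤ) - c).toNat = m
      omega
  calc ({m : ℕ | ∃ e ∈ E, (m:ℤ) = (e:ℤ) - c} ∩ Set.Ioc M₀ (M₀+N)).ncard
      ≤ ((fun e : ℕ => ((e:ℤ) - c).toNat) '' F).ncard :=
        Set.ncard_le_ncard hsub (hFfin.image _)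
    _ ≤ F.ncard := Set.ncard_image_le hFfin
    _ ≤ (E ∩ {0}).ncard + (E ∩ Set.Ioc a (a+N)).ncard := by
        rw [hF, Set.inter_union_distrib_left]
        exact Set.ncard_union_le _ _
    _ ≤ (E ∩ Set.Ioc a (a+N)).ncard + 1 := by
        have : (E ∩ {0}).ncard ≤ ({0} : Set ℕ).ncard :=
          Set.ncard_le_ncard Set.inter_subset_right (Set.finite_singleton 0)
        rw [Set.ncard_singleton] at this
        omega

lemma union_cnt (E : Set ℕ) (S : Finset ℤ) (M₀ N : ℕ) :
    ((⋃ c ∈ S, {m : ℕ | ∃ e ∈ E, (m:ℤ) = (e:ℤ) - c}) ∩ Set.Ioc M₀ (M₀+N)).ncard ≤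
      ∑ c ∈ S, ((E ∩ Set.Ioc (M₀+c).toNat ((M₀+c).toNat + N)).ncard + 1) := by
  induction S using Finset.induction_on with
  | empty => simp
  | @insert c S' hc ih =>
    rw [Finset.sum_insert hc]
    have hU : (⋃ x ∈ insert c S', {m : ℕ | ∃ e ∈ E, (m:ℤ) = (e:ℤ) - x}) =
        {m : ℕ | ∃ e ∈ E, (m:ℤ) = (e:ℤ) - c} ∪ ⋃ x ∈ S', {m : ℕ | ∃ e ∈ E, (m:ℤ) = (e:ℤ) - x} := by
      simp [Set.biUnion_insert]
    rw [hU, Set.union_inter_distrib_right]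
    calc _ ≤ ({m : ℕ | ∃ e ∈ E, (m:ℤ) = (e:ℤ) - c} ∩ Set.Ioc M₀ (M₀+N)).ncard +
          ((⋃ x ∈ S', {m : ℕ | ∃ e ∈ E, (m:ℤ) = (e:ℤ) - x}) ∩ Set.Ioc M₀ (M₀+N)).ncard :=
          Set.ncard_union_le _ _
      _ ≤ _ := Nat.add_le_add (bad_cnt E c M₀ N) ih

/-- If `d*(D) = δ > 0`, `d*(E) = 0`, `M ≥ 2^ℓ` and `n₀, ..., n_{M-1} ∈ ℕ`, then there is
`n ∈ D` such that for all choices of indices `j₁ < ... < j_{2^ℓ-1}` below `M`,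
`∂(n_{j₁},...,n_{j_{2^ℓ-1}}, n) ∉ E`. -/
theorem avoid_null_set_in_last_coordinate (ℓ : ℕ) (hℓ : 1 ≤ ℓ) (D E : Set ℕ) (δ : ℝ)
    (hδ : 0 < δ) (hD : upperBanachDensity D = δ) (hE : upperBanachDensity E = 0)
    (M : ℕ) (hM : 2 ^ ℓ ≤ M) (n : ℕ → ℕ) :
    ∃ n₀ ∈ D, ∀ j : ℕ → ℕ, StrictMono j → (∀ i, i < 2 ^ ℓ - 1 → j i < M) →
      ∀ e ∈ E, (e : ℤ) ≠
        del ℓ (fun i => if i < 2 ^ ℓ - 1 then (n (j i) : ℤ) else (n₀ : ℤ)) := by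
  by_contra hcon
  push_neg at hcon
  -- the finite set of possible "constants"
  set S : Finset ℤ := Finset.image
    (fun v : Fin (2 ^ ℓ - 1) → Fin M =>
      del ℓ (fun i => if h : i < 2 ^ ℓ - 1 then ((n (v ⟨i, h⟩) : ℤ)) else 0)) Finset.univ
    with hS
  -- D is covered by the translates of E
  have hcover : D ⊆ ⋃ c ∈ S, {m : ℕ | ∃ e ∈ E, (m:ℤ) = (e:ℤ) - c} := by
    intro n₀ hn₀
    obtain ⟨j, hsm, hjM, e, heE, heq⟩ := hcon n₀ hn₀
    set g : ℕ → ℤ := fun i => if i < 2 ^ ℓ - 1 then (n (j i) : ℤ) else 0 with hg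
    have hcS : del ℓ g ∈ S := by
      rw [hS]
      apply Finset.mem_image.2
      refine ⟨fun i : Fin (2 ^ ℓ - 1) => ⟨j i.1, hjM i.1 i.2⟩, Finset.mem_univ _, ?_⟩
      apply del_congr
      intro i _
      by_cases h : i < 2 ^ ℓ - 1 <;> simp [h, hg]
    have hval : (n₀ : ℤ) = (e : ℤ) - del ℓ g := by
      have hdl := del_last ℓ (fun i => if i < 2 ^ ℓ - 1 then (n (j i) : ℤ) else (n₀ : ℤ)) g
        (fun i hi => by simp [hg, hi])
      have hgz : g (2 ^ ℓ - 1) = (0:ℤ) := by simp [hg]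
      simp only [lt_self_iff_false, if_false, hgz] at hdl
      rw [heq]
      omega
    exact Set.mem_biUnion hcS ⟨e, heE, hval⟩
  set k : ℕ := S.card with hk
  set ε : ℝ := δ / (4 * (k + 1)) with hε
  have hεpos : 0 < ε := by positivity
  obtain ⟨N₀, hN₀, hbE⟩ := exists_good_N E hE ε hεpos
  obtain ⟨T, hT⟩ := exists_nat_gt (2 * (k:ℝ) / δ)
  set t : ℕ := T + 1 with ht
  set N : ℕ := t * N₀ with hN
  have hNpos : 0 < N := by positivity
  have hNbig : 2 * (k:ℝ) / δ < (N:ℝ) := by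
    have h1 : (T:ℝ) < N := by
      have : T < N := by
        calc T < t := by omega
          _ ≤ t * N₀ := Nat.le_mul_of_pos_right t hN₀
      exact_mod_cast this
    linarith
  -- count D in any window of length N
  have hDcnt : ∀ M₀ : ℕ, ((D ∩ Set.Ioc M₀ (M₀ + N)).ncard : ℝ) ≤ k * (ε * N + 1) := by
    intro M₀
    have h1 : (D ∩ Set.Ioc M₀ (M₀ + N)).ncard ≤
        ((⋃ c ∈ S, {m : ℕ | ∃ e ∈ E, (m:ℤ) = (e:ℤ) - c}) ∩ Set.Ioc M₀ (M₀+N)).ncard :=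
      Set.ncard_le_ncard (Set.inter_subset_inter_left _ hcover)
        ((Set.finite_Ioc M₀ (M₀+N)).subset Set.inter_subset_right)
    have h2 := union_cnt E S M₀ N
    have h3 : (∑ c ∈ S, ((E ∩ Set.Ioc ((M₀:ℤ)+c).toNat (((M₀:ℤ)+c).toNat + N)).ncard + 1) : ℝ)
        ≤ ∑ c ∈ S, (ε * N + 1) := by
      apply Finset.sum_le_sum
      intro c _
      have := cnt_mul E N₀ ε hbE t (((M₀:ℤ)+c).toNat)
      rw [← hN] at this
      push_cast
      have hεN : ε * ((t:ℝ) * N₀) = ε * N := by rw [hN]; push_cast; ring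
      rw [hεN] at this
      linarith
    have h4 : (∑ c ∈ S, (ε * (N:ℝ) + 1)) = k * (ε * N + 1) := by
      rw [Finset.sum_const, hk]
      simp [nsmul_eq_mul]
      ring
    calc ((D ∩ Set.Ioc M₀ (M₀ + N)).ncard : ℝ)
        ≤ (((⋃ c ∈ S, {m : ℕ | ∃ e ∈ E, (m:ℤ) = (e:ℤ) - c}) ∩ Set.Ioc M₀ (M₀+N)).ncard : ℝ) := by
          exact_mod_cast h1
      _ ≤ (∑ c ∈ S, ((E ∩ Set.Ioc ((M₀:ℤ)+c).toNat (((M₀:ℤ)+c).toNat + N)).ncard + 1) : ℝ) := by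
          exact_mod_cast h2
      _ ≤ ∑ c ∈ S, (ε * N + 1) := h3
      _ = k * (ε * N + 1) := h4
  have hfinal : δ ≤ (k:ℝ) * ε + k / N := by
    rw [← hD]
    calc upperBanachDensity D ≤ ⨆ M₀ : ℕ, ((D ∩ Set.Ioc M₀ (M₀ + N)).ncard : ℝ) / N :=
        ubd_le D N hNpos
      _ ≤ (k:ℝ) * ε + k / N := by
        apply ciSup_le
        intro M₀
        rw [div_le_iff₀ (by exact_mod_cast hNpos)]
        calc ((D ∩ Set.Ioc M₀ (M₀ + N)).ncard : ℝ) ≤ k * (ε * N + 1) := hDcnt M₀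
          _ = ((k:ℝ) * ε + k / N) * N := by
            field_simp
  have h1 : (k:ℝ) * ε ≤ δ / 4 := by
    rw [hε, ← mul_div_assoc]
    rw [div_le_div_iff₀ (by positivity) (by norm_num : (0:ℝ) < 4)]
    nlinarith [Nat.cast_nonneg (α := ℝ) k, hδ.le]
  have h2 : (k:ℝ) / N ≤ δ / 2 := by
    rw [div_le_iff₀ (by exact_mod_cast hNpos)]
    rw [div_lt_iff₀ hδ] at hNbig
    nlinarith
  linarith
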